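/- Let G and H be groups, and suppose every finite subgroup of G has a normal abelian subgroup of index at most m, and every finite subgroup of H has a normal abelian subgroup of index at most n. Then every finite subgroup of G × H has a normal abelian subgroup of index at most m·n, and this bound is attained if m and n are attained in G and H respectively. -/

import Mathlib

section Aux

variable {G H : Type*} [Group G] [Group H]

/-- Part 1 helper: every finite subgroup of a product has a normal abelian subgroup of
index at most `m * n`. -/
theorem jordan_prod_upper (m n : ℕ)
    (hG : ∀ K : Subgroup G, (K : Set G).Finite →
      ∃ A : Subgroup ↥K, A.Normal ∧ IsMulCommutative ↥A ∧ A.index ≤ m)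
    (hH : ∀ K : Subgroup H, (K : Set H).Finite →
      ∃ A : Subgroup ↥K, A.Normal ∧ IsMulCommutative ↥A ∧ A.index ≤ n)
    (K : Subgroup (G × H)) (hK : (K : Set (G × H)).Finite) :
    ∃ A : Subgroup ↥K, A.Normal ∧ IsMulCommutative ↥A ∧ A.index ≤ m * n := by
  set K₁ : Subgroup G := K.map (MonoidHom.fst G H) with hK₁def
  set K₂ : Subgroup H := K.map (MonoidHom.snd G H) with hK₂def
  have hK₁fin : (K₁ : Set G).Finite := by
    rw [hK₁def, Subgroup.coe_map]; exact hK.image _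
  have hK₂fin : (K₂ : Set H).Finite := by
    rw [hK₂def, Subgroup.coe_map]; exact hK.image _
  obtain ⟨A₁, hA₁n, hA₁c, hA₁i⟩ := hG K₁ hK₁fin
  obtain ⟨A₂, hA₂n, hA₂c, hA₂i⟩ := hH K₂ hK₂fin
  haveI : Finite ↥K₁ := hK₁fin.to_subtype
  haveI : Finite ↥K₂ := hK₂fin.to_subtype
  haveI := hA₁n
  haveI := hA₂n
  -- the two projections K → K₁, K → K₂
  let φ₁ : ↥K →* ↥K₁ := ((MonoidHom.fst G H).comp K.subtype).codRestrict K₁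
    (fun k => ⟨(k : G × H), k.2, rfl⟩)
  let φ₂ : ↥K →* ↥K₂ := ((MonoidHom.snd G H).comp K.subtype).codRestrict K₂
    (fun k => ⟨(k : G × H), k.2, rfl⟩)
  let f : ↥K →* (↥K₁ ⧸ A₁) × (↥K₂ ⧸ A₂) :=
    ((QuotientGroup.mk' A₁).comp φ₁).prod ((QuotientGroup.mk' A₂).comp φ₂)
  refine ⟨f.ker, inferInstance, ?_, ?_⟩
  · -- commutativity
    constructor
    constructor
    rintro ⟨k, hk⟩ ⟨k', hk'⟩
    rw [MonoidHom.mem_ker, Prod.ext_iff] at hk hk'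
    have hk1 : φ₁ k ∈ A₁ := (QuotientGroup.eq_one_iff _).mp hk.1
    have hk2 : φ₂ k ∈ A₂ := (QuotientGroup.eq_one_iff _).mp hk.2
    have hk1' : φ₁ k' ∈ A₁ := (QuotientGroup.eq_one_iff _).mp hk'.1
    have hk2' : φ₂ k' ∈ A₂ := (QuotientGroup.eq_one_iff _).mp hk'.2
    haveI := hA₁c
    haveI := hA₂c
    have h1 : φ₁ k * φ₁ k' = φ₁ k' * φ₁ k := by
      have := hA₁c.is_comm.comm (⟨φ₁ k, hk1⟩ : ↥A₁) ⟨φ₁ k', hk1'⟩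
      exact congrArg Subtype.val this
    have h2 : φ₂ k * φ₂ k' = φ₂ k' * φ₂ k := by
      have := hA₂c.is_comm.comm (⟨φ₂ k, hk2⟩ : ↥A₂) ⟨φ₂ k', hk2'⟩
      exact congrArg Subtype.val this
    have h1' : (k : G × H).1 * (k' : G × H).1 = (k' : G × H).1 * (k : G × H).1 :=
      congrArg Subtype.val h1
    have h2' : (k : G × H).2 * (k' : G × H).2 = (k' : G × H).2 * (k : G × H).2 :=
      congrArg Subtype.val h2
    exact Subtype.ext (Subtype.ext (Prod.ext h1' h2'))
  · -- index bound
    haveI : Finite (↥K₁ ⧸ A₁) := Quotient.finite _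
    haveI : Finite (↥K₂ ⧸ A₂) := Quotient.finite _
    have h1 : f.ker.index = Nat.card f.range := Subgroup.index_ker f
    have h2 : Nat.card f.range ≤ Nat.card ((↥K₁ ⧸ A₁) × (↥K₂ ⧸ A₂)) :=
      Nat.card_le_card_of_injective _ f.range.subtype_injective
    have h3 : Nat.card ((↥K₁ ⧸ A₁) × (↥K₂ ⧸ A₂)) = A₁.index * A₂.index := by
      rw [Nat.card_prod]; rfl
    calc f.ker.index = Nat.card f.range := h1
      _ ≤ Nat.card ((↥K₁ ⧸ A₁) × (↥K₂ ⧸ A₂)) := h2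
      _ = A₁.index * A₂.index := h3
      _ ≤ m * n := Nat.mul_le_mul hA₁i hA₂i

end Aux

section Aux2

variable {G H : Type*} [Group G] [Group H]

theorem jordan_prod_lower (m n : ℕ)
    (hK₁ : ∃ K : Subgroup G, (K : Set G).Finite ∧
        ∀ A : Subgroup ↥K, A.Normal → IsMulCommutative ↥A → m ≤ A.index)
    (hK₂ : ∃ K : Subgroup H, (K : Set H).Finite ∧
        ∀ A : Subgroup ↥K, A.Normal → IsMulCommutative ↥A → n ≤ A.index) :
    ∃ K : Subgroup (G × H), (K : Set (G × H)).Finite ∧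
        ∀ A : Subgroup ↥K, A.Normal → IsMulCommutative ↥A → m * n ≤ A.index := by
  obtain ⟨K₁, hK₁fin, hK₁m⟩ := hK₁
  obtain ⟨K₂, hK₂fin, hK₂n⟩ := hK₂
  refine ⟨K₁.prod K₂, ?_, ?_⟩
  · rw [Subgroup.coe_prod]; exact hK₁fin.prod hK₂fin
  intro A hAn hAc
  haveI := hAn; haveI := hAc
  haveI : Finite ↥K₁ := hK₁fin.to_subtype
  haveI : Finite ↥K₂ := hK₂fin.to_subtype
  haveI : Finite ↥(K₁.prod K₂) := by
    have : ((K₁.prod K₂ : Subgroup (G × H)) : Set (G × H)).Finite := by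
      rw [Subgroup.coe_prod]; exact hK₁fin.prod hK₂fin
    exact this.to_subtype
  let e : ↥(K₁.prod K₂) ≃* ↥K₁ × ↥K₂ := Subgroup.prodEquiv K₁ K₂
  let A' : Subgroup (↥K₁ × ↥K₂) := A.map e.toMonoidHom
  have hA'idx : A'.index = A.index := by
    have := Subgroup.index_map_eq A (f := e.toMonoidHom) e.surjective
      (by rw [(MonoidHom.ker_eq_bot_iff e.toMonoidHom).mpr e.injective]; exact bot_le)
    exact this
  have hA'n : A'.Normal := hAn.map _ e.surjective
  haveI hA'c : IsMulCommutative ↥A' := Subgroup.map_isMulCommutative A _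
  haveI := hA'n
  let A₁ : Subgroup ↥K₁ := A'.map (MonoidHom.fst _ _)
  let A₂ : Subgroup ↥K₂ := A'.map (MonoidHom.snd _ _)
  have hA₁n : A₁.Normal := hA'n.map _ Prod.fst_surjective
  have hA₂n : A₂.Normal := hA'n.map _ Prod.snd_surjective
  haveI hA₁c : IsMulCommutative ↥A₁ := Subgroup.map_isMulCommutative A' _
  haveI hA₂c : IsMulCommutative ↥A₂ := Subgroup.map_isMulCommutative A' _
  have hm : m ≤ A₁.index := hK₁m A₁ hA₁n hA₁c
  have hn : n ≤ A₂.index := hK₂n A₂ hA₂n hA₂c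
  have hle : A' ≤ A₁.prod A₂ := by
    intro x hx
    exact ⟨⟨x, hx, rfl⟩, ⟨x, hx, rfl⟩⟩
  have hdvd : (A₁.prod A₂).index ∣ A'.index := Subgroup.index_dvd_of_le hle
  have hne : A'.index ≠ 0 := Subgroup.index_ne_zero_of_finite
  have h4 : (A₁.prod A₂).index ≤ A'.index := Nat.le_of_dvd (Nat.pos_of_ne_zero hne) hdvd
  calc m * n ≤ A₁.index * A₂.index := Nat.mul_le_mul hm hn
    _ = (A₁.prod A₂).index := (Subgroup.index_prod A₁ A₂).symm
    _ ≤ A'.index := h4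
    _ = A.index := hA'idx

end Aux2


/-- Jordan constants multiply under direct products. -/
theorem jordan_constant_prod {G H : Type*} [Group G] [Group H] (m n : ℕ)
    (hG : ∀ K : Subgroup G, (K : Set G).Finite →
      ∃ A : Subgroup ↥K, A.Normal ∧ IsMulCommutative ↥A ∧ A.index ≤ m)
    (hH : ∀ K : Subgroup H, (K : Set H).Finite →
      ∃ A : Subgroup ↥K, A.Normal ∧ IsMulCommutative ↥A ∧ A.index ≤ n) :
    (∀ K : Subgroup (G × H), (K : Set (G × H)).Finite →
      ∃ A : Subgroup ↥K, A.Normal ∧ IsMulCommutative ↥A ∧ A.index ≤ m * n) ∧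
    ((∃ K : Subgroup G, (K : Set G).Finite ∧
        ∀ A : Subgroup ↥K, A.Normal → IsMulCommutative ↥A → m ≤ A.index) →
     (∃ K : Subgroup H, (K : Set H).Finite ∧
        ∀ A : Subgroup ↥K, A.Normal → IsMulCommutative ↥A → n ≤ A.index) →
     ∃ K : Subgroup (G × H), (K : Set (G × H)).Finite ∧
        ∀ A : Subgroup ↥K, A.Normal → IsMulCommutative ↥A → m * n ≤ A.index) := by
  exact ⟨fun K hK => jordan_prod_upper m n hG hH K hK, jordan_prod_lower m n⟩
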